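/- Let m ≥ 0 be an integer and let f ∈ L¹(ℝ^d) ∩ C^m(ℝ^d) be such that every partial derivative f^{(α)} with |α| = m is uniformly continuous on ℝ^d. Then for every multi-index γ ∈ ℕ₀^d with |γ| ≤ m, |f^{(γ)}(x)| → 0 as ‖x‖ → ∞. -/

import Mathlib

open MeasureTheory Filter Topology

noncomputable section

/-- `ℝ^d` as a pi type; `volume` is `d`-dimensional Lebesgue measure. -/
abbrev Vec (d : ℕ) := Fin d → ℝ

/-- The Euclidean norm on `ℝ^d`. -/
def euclNorm {d : ℕ} (z : Vec d) : ℝ := Real.sqrt (∑ i, z i ^ 2)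

/-- Partial derivative in direction `i`. -/
noncomputable def pd {d : ℕ} (i : Fin d) (g : Vec d → ℝ) : Vec d → ℝ :=
  fun x => lineDeriv ℝ g x (Pi.single i 1)

/-- Iterated partial derivative `g^{(γ)}` for a multi-index `γ`. -/
noncomputable def mderiv {d : ℕ} (γ : Fin d → ℕ) (g : Vec d → ℝ) : Vec d → ℝ :=
  (List.finRange d).foldr (fun i F => (pd i)^[γ i] F) g

namespace St18
variable {d : ℕ}

/-- foldr of `pd` over a list of directions. -/
noncomputable def pdList (L : List (Fin d)) (g : Vec d → ℝ) : Vec d → ℝ := L.foldr pd g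

@[simp] lemma pdList_nil (g : Vec d → ℝ) : pdList [] g = g := rfl
@[simp] lemma pdList_cons (i : Fin d) (L : List (Fin d)) (g : Vec d → ℝ) :
    pdList (i :: L) g = pd i (pdList L g) := rfl
lemma pdList_append (L₁ L₂ : List (Fin d)) (g : Vec d → ℝ) :
    pdList (L₁ ++ L₂) g = pdList L₁ (pdList L₂ g) := by
  simp [pdList, List.foldr_append]

/-- the canonical list of a multiindex -/
def mlist (γ : Fin d → ℕ) : List (Fin d) :=
  (List.finRange d).flatMap fun i => List.replicate (γ i) i

lemma iterate_pd (i : Fin d) (k : ℕ) (g : Vec d → ℝ) :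
    (pd i)^[k] g = pdList (List.replicate k i) g := by
  induction k with
  | zero => rfl
  | succ n ih => rw [Function.iterate_succ_apply', ih, List.replicate_succ, pdList_cons]

lemma mderiv_eq_pdList (γ : Fin d → ℕ) (g : Vec d → ℝ) :
    mderiv γ g = pdList (mlist γ) g := by
  unfold mderiv mlist
  induction (List.finRange d) with
  | nil => rfl
  | cons i Ls ih => rw [List.foldr_cons, ih, List.flatMap_cons, pdList_append, iterate_pd]

lemma length_mlist (γ : Fin d → ℕ) : (mlist γ).length = ∑ i, γ i := by
  simp [mlist, List.length_flatMap, Fin.sum_univ_def, Function.comp_def]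

lemma count_mlist (γ : Fin d → ℕ) (j : Fin d) : (mlist γ).count j = γ j := by
  simp only [mlist, List.count_flatMap]
  rw [show (List.count j ∘ fun i => List.replicate (γ i) i)
      = fun i => if i = j then γ i else 0 from funext fun i => by
        simp [List.count_replicate]]
  rw [← Fin.sum_univ_def]
  simp

end St18

namespace St18
variable {d : ℕ}

lemma pd_eq_fderiv {g : Vec d → ℝ} (hg : Differentiable ℝ g) (i : Fin d) :
    pd i g = fun x => fderiv ℝ g x (Pi.single i 1) :=
  funext fun x => (hg x).lineDeriv_eq_fderiv

lemma pd_contDiff {n : ℕ} {g : Vec d → ℝ} (hg : ContDiff ℝ ((n+1 : ℕ)) g) (i : Fin d) :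
    ContDiff ℝ (n : ℕ) (pd i g) := by
  rw [pd_eq_fderiv (hg.differentiable (by simp)) i]
  exact (hg.fderiv_right (by exact_mod_cast le_refl (n+1))).clm_apply contDiff_const

lemma pdList_contDiff {n : ℕ} : ∀ (L : List (Fin d)) {g : Vec d → ℝ},
    ContDiff ℝ ((n + L.length : ℕ)) g → ContDiff ℝ (n : ℕ) (pdList L g) := by
  intro L
  induction L generalizing n with
  | nil => intro g hg; simpa using hg
  | cons i L ih =>
    intro g hg
    rw [pdList_cons]
    have : ContDiff ℝ ((n + 1 : ℕ)) (pdList L g) := by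
      apply ih (n := n+1)
      convert hg using 2
      simp [List.length_cons]; omega
    exact pd_contDiff this i

lemma pd_sq {g : Vec d → ℝ} (hg : ContDiff ℝ 2 g) (i j : Fin d) (x : Vec d) :
    pd i (pd j g) x = fderiv ℝ (fderiv ℝ g) x (Pi.single i 1) (Pi.single j 1) := by
  have hΦ : ContDiff ℝ 1 (fderiv ℝ g) := hg.fderiv_right (by norm_num)
  have hpd : pd j g = fun y => fderiv ℝ g y (Pi.single j 1) :=
    pd_eq_fderiv (hg.differentiable (by norm_num)) j
  have hdiff : DifferentiableAt ℝ (fun y => fderiv ℝ g y (Pi.single j 1)) x :=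
    ((hΦ.differentiable one_ne_zero x).clm_apply (differentiableAt_const _))
  rw [show pd i (pd j g) x = lineDeriv ℝ (pd j g) x (Pi.single i 1) from rfl, hpd,
    hdiff.lineDeriv_eq_fderiv,
    fderiv_clm_apply (hΦ.differentiable one_ne_zero x) (differentiableAt_const _)]
  simp

lemma pd_comm {g : Vec d → ℝ} (hg : ContDiff ℝ 2 g) (i j : Fin d) :
    pd i (pd j g) = pd j (pd i g) := by
  funext x
  rw [pd_sq hg i j x, pd_sq hg j i x]
  exact (hg.contDiffAt.isSymmSndFDerivAt (by norm_num)) _ _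

end St18

namespace St18
variable {d : ℕ}

lemma pdList_perm {L L' : List (Fin d)} (h : L.Perm L') :
    ∀ {g : Vec d → ℝ}, ContDiff ℝ (L.length : ℕ) g → pdList L g = pdList L' g := by
  induction h with
  | nil => intro g _; rfl
  | cons x h ih =>
    intro g hg
    have : ContDiff ℝ (_ : ℕ) g := hg.of_le (by exact_mod_cast Nat.le_succ _)
    rw [pdList_cons, pdList_cons, ih this]
  | swap x y L =>
    intro g hg
    simp only [pdList_cons]
    exact pd_comm (pdList_contDiff (n := 2) L (by
      convert hg using 2; simp [List.length_cons]; omega)) y x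
  | trans h1 h2 ih1 ih2 =>
    intro g hg
    rw [ih1 hg, ih2 (h1.length_eq ▸ hg)]

end St18

namespace St18
variable {d : ℕ}

noncomputable def conv (g ψ : Vec d → ℝ) : Vec d → ℝ := fun x => ∫ y, ψ y * g (x - y)

lemma conv_symm_form (g ψ : Vec d → ℝ) (x : Vec d) :
    conv g ψ x = ∫ z, ψ (x - z) * g z := by
  rw [conv, ← MeasureTheory.integral_sub_left_eq_self (fun y => ψ y * g (x - y)) volume x]
  simp [sub_sub_cancel]

lemma pd_continuous {g : Vec d → ℝ} (hg : ContDiff ℝ 1 g) (i : Fin d) :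
    Continuous (pd i g) := by
  have := pd_contDiff (n := 0) (g := g) (by exact_mod_cast hg) i
  exact_mod_cast this.continuous

lemma hasDerivAt_line {g : Vec d → ℝ} (hg : Differentiable ℝ g) (i : Fin d) (z : Vec d)
    (t : ℝ) :
    HasDerivAt (fun s : ℝ => g (z + s • (Pi.single i 1 : Vec d)))
      (pd i g (z + t • (Pi.single i 1 : Vec d))) t := by
  have hc : HasDerivAt (fun s : ℝ => z + s • (Pi.single i 1 : Vec d))
      (Pi.single i 1 : Vec d) t := by
    simpa using ((hasDerivAt_id t).smul_const (Pi.single i 1 : Vec d)).const_add z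
  have h2 := (hg _).hasFDerivAt.comp_hasDerivAt t hc
  rw [pd_eq_fderiv hg]
  exact h2

lemma pd_conv_left {g ψ : Vec d → ℝ} (hg : ContDiff ℝ 1 g) (hψ : Continuous ψ)
    (hψc : HasCompactSupport ψ) (i : Fin d) :
    pd i (conv g ψ) = conv (pd i g) ψ := by
  funext x₀
  set e : Vec d := Pi.single i 1 with he
  have hgd : Differentiable ℝ g := hg.differentiable one_ne_zero
  have hgc : Continuous g := hg.continuous
  have hpdc : Continuous (pd i g) := pd_continuous hg i
  have hS : IsCompact ((fun p : ℝ × Vec d => x₀ + p.1 • e - p.2) ''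
      ((Metric.closedBall (0:ℝ) 1) ×ˢ tsupport ψ)) :=
    ((isCompact_closedBall _ _).prod hψc).image (by fun_prop)
  obtain ⟨M, hM⟩ := hS.exists_bound_of_continuousOn hpdc.continuousOn
  have key := hasDerivAt_integral_of_dominated_loc_of_deriv_le (μ := volume)
      (F := fun (t : ℝ) (y : Vec d) => ψ y * g (x₀ + t • e - y))
      (F' := fun (t : ℝ) (y : Vec d) => ψ y * pd i g (x₀ + t • e - y))
      (x₀ := (0:ℝ)) (s := Metric.ball (0:ℝ) 1) (bound := fun y => ‖ψ y‖ * M) (Metric.ball_mem_nhds _ zero_lt_one)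
      (Eventually.of_forall fun t =>
        ((hψ.mul (hgc.comp (by fun_prop))).aestronglyMeasurable))
      (by
        apply Continuous.integrable_of_hasCompactSupport
        · exact hψ.mul (hgc.comp (by fun_prop))
        · exact hψc.mul_right)
      ((hψ.mul (hpdc.comp (by fun_prop))).aestronglyMeasurable)
      (Eventually.of_forall fun y => by
        intro t ht
        by_cases hy : y ∈ tsupport ψ
        · rw [norm_mul]
          refine mul_le_mul_of_nonneg_left ?_ (norm_nonneg _)
          exact hM _ ⟨(t, y), ⟨Metric.ball_subset_closedBall ht, hy⟩, rfl⟩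
        · simp [image_eq_zero_of_notMem_tsupport hy])
      (by
        apply Continuous.integrable_of_hasCompactSupport
        · exact hψ.norm.mul continuous_const
        · exact hψc.norm.mul_right)
      (Eventually.of_forall fun y => by
        intro t ht
        have h1 := (hasDerivAt_line hgd i (x₀ - y) t).const_mul (ψ y)
        simpa [add_sub_right_comm] using h1)
  have h2 := key.2
  have : pd i (conv g ψ) x₀ = deriv (fun t : ℝ => conv g ψ (x₀ + t • e)) 0 := rfl
  rw [this]
  have h3 : (fun t : ℝ => conv g ψ (x₀ + t • e))
      = fun t : ℝ => ∫ y, ψ y * g (x₀ + t • e - y) := rfl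
  rw [h3, h2.deriv]
  simp [conv]

end St18

namespace St18
variable {d : ℕ}

lemma pd_zero_outside {ψ : Vec d → ℝ} (i : Fin d) {x : Vec d} (hx : x ∉ tsupport ψ) :
    pd i ψ x = 0 := by
  have hev : ψ =ᶠ[𝓝 x] 0 := notMem_tsupport_iff_eventuallyEq.mp hx
  have hcont : Continuous (fun t : ℝ => x + t • (Pi.single i 1 : Vec d)) := by fun_prop
  have h0 : (fun t : ℝ => ψ (x + t • (Pi.single i 1 : Vec d))) =ᶠ[𝓝 (0:ℝ)] (fun _ => 0) := by
    have : Tendsto (fun t : ℝ => x + t • (Pi.single i 1 : Vec d)) (𝓝 0) (𝓝 x) := by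
      have := hcont.tendsto 0
      simpa using this
    exact this.eventually hev
  have : pd i ψ x = deriv (fun t : ℝ => ψ (x + t • (Pi.single i 1 : Vec d))) 0 := rfl
  rw [this, h0.deriv_eq]
  simp

lemma tsupport_pd_subset (ψ : Vec d → ℝ) (i : Fin d) :
    tsupport (pd i ψ) ⊆ tsupport ψ := by
  apply closure_minimal _ (isClosed_tsupport ψ)
  intro x hx
  by_contra hxn
  exact hx (pd_zero_outside i hxn)

lemma hasCompactSupport_pd {ψ : Vec d → ℝ} (hψc : HasCompactSupport ψ) (i : Fin d) :
    HasCompactSupport (pd i ψ) :=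
  IsCompact.of_isClosed_subset hψc (isClosed_tsupport _) (tsupport_pd_subset ψ i)

lemma global_bound {h : Vec d → ℝ} (hc : Continuous h) (hcs : HasCompactSupport h) :
    ∃ M : ℝ, ∀ x, ‖h x‖ ≤ M := by
  obtain ⟨M, hM⟩ := hcs.exists_bound_of_continuousOn hc.continuousOn
  refine ⟨max M 0, fun x => ?_⟩
  by_cases hx : x ∈ tsupport h
  · exact (hM x hx).trans (le_max_left _ _)
  · simp [image_eq_zero_of_notMem_tsupport hx]

end St18

namespace St18
variable {d : ℕ}

lemma pd_conv_right {g ψ : Vec d → ℝ} (hg : Continuous g) (hψ : ContDiff ℝ 1 ψ)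
    (hψc : HasCompactSupport ψ) (i : Fin d) :
    pd i (conv g ψ) = conv g (pd i ψ) := by
  funext x₀
  set e : Vec d := Pi.single i 1 with he
  have hψd : Differentiable ℝ ψ := hψ.differentiable one_ne_zero
  have hψcont : Continuous ψ := hψ.continuous
  have hpdc : Continuous (pd i ψ) := pd_continuous hψ i
  obtain ⟨M', hM'⟩ := global_bound hpdc (hasCompactSupport_pd hψc i)
  set K₀ : Set (Vec d) := (fun p : ℝ × Vec d => x₀ + p.1 • e - p.2) ''
      ((Metric.closedBall (0:ℝ) 1) ×ˢ tsupport ψ) with hK₀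
  have hK₀c : IsCompact K₀ :=
    ((isCompact_closedBall _ _).prod hψc).image (by fun_prop)
  have hmeas : ∀ t : ℝ, AEStronglyMeasurable (fun z : Vec d => ψ (x₀ + t • e - z) * g z)
      volume := fun t => ((hψcont.comp (by fun_prop)).mul hg).aestronglyMeasurable
  have hint0 : Integrable (fun z : Vec d => ψ (x₀ + (0:ℝ) • e - z) * g z) volume := by
    apply Continuous.integrable_of_hasCompactSupport
    · exact (hψcont.comp (by fun_prop)).mul hg
    · apply HasCompactSupport.mul_right
      apply HasCompactSupport.intro (hK₀c)
      intro z hz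
      apply image_eq_zero_of_notMem_tsupport
      intro hmem
      exact hz ⟨((0:ℝ), x₀ + (0:ℝ) • e - z),
        ⟨Metric.mem_closedBall_self zero_le_one, hmem⟩, by simp⟩
  have hmeas' : AEStronglyMeasurable (fun z : Vec d => pd i ψ (x₀ + (0:ℝ) • e - z) * g z)
      volume := ((hpdc.comp (by fun_prop)).mul hg).aestronglyMeasurable
  have hboundint : Integrable (K₀.indicator fun z : Vec d => M' * ‖g z‖) volume := by
    apply MeasureTheory.IntegrableOn.integrable_indicator _ hK₀c.isClosed.measurableSet
    exact ((continuous_const.mul hg.norm).continuousOn).integrableOn_compact hK₀c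
  have hbound : ∀ z : Vec d, ∀ t ∈ Metric.ball (0:ℝ) 1,
      ‖pd i ψ (x₀ + t • e - z) * g z‖ ≤ K₀.indicator (fun z => M' * ‖g z‖) z := by
    intro z t ht
    by_cases hz : z ∈ K₀
    · rw [Set.indicator_of_mem hz, norm_mul]
      exact mul_le_mul_of_nonneg_right (hM' _) (norm_nonneg _)
    · have hzt : x₀ + t • e - z ∉ tsupport ψ := by
        intro hmem
        exact hz ⟨(t, x₀ + t • e - z), ⟨Metric.ball_subset_closedBall ht, hmem⟩, by simp⟩
      have h0 : pd i ψ (x₀ + t • e - z) = 0 := by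
        apply image_eq_zero_of_notMem_tsupport
        intro hmem; exact hzt (tsupport_pd_subset ψ i hmem)
      rw [Set.indicator_of_notMem hz, h0]
      simp
  have hdiff : ∀ z : Vec d, ∀ t ∈ Metric.ball (0:ℝ) 1,
      HasDerivAt (fun t : ℝ => ψ (x₀ + t • e - z) * g z)
        (pd i ψ (x₀ + t • e - z) * g z) t := by
    intro z t _
    have h1 := (hasDerivAt_line hψd i (x₀ - z) t).mul_const (g z)
    simpa [add_sub_right_comm] using h1
  have key := hasDerivAt_integral_of_dominated_loc_of_deriv_le (μ := volume)
      (F := fun (t : ℝ) (z : Vec d) => ψ (x₀ + t • e - z) * g z)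
      (F' := fun (t : ℝ) (z : Vec d) => pd i ψ (x₀ + t • e - z) * g z)
      (x₀ := (0:ℝ)) (s := Metric.ball (0:ℝ) 1) (bound := K₀.indicator fun z => M' * ‖g z‖) (Metric.ball_mem_nhds _ zero_lt_one)
      (Eventually.of_forall hmeas) hint0 hmeas'
      (Eventually.of_forall hbound) hboundint (Eventually.of_forall hdiff)
  have h2 := key.2
  have hstart : pd i (conv g ψ) x₀ = deriv (fun t : ℝ => conv g ψ (x₀ + t • e)) 0 := rfl
  have h3 : (fun t : ℝ => conv g ψ (x₀ + t • e))
      = fun t : ℝ => ∫ z, ψ (x₀ + t • e - z) * g z := by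
    funext t; exact conv_symm_form g ψ _
  rw [hstart, h3, h2.deriv, conv_symm_form]
  simp

end St18

namespace St18
variable {d : ℕ}

lemma coe_le_infty (n : ℕ) : ((n : ℕ∞) : WithTop ℕ∞) ≤ ((⊤ : ℕ∞) : WithTop ℕ∞) := by
  exact_mod_cast le_top

lemma pd_contDiff_top {ψ : Vec d → ℝ} (hψ : ContDiff ℝ ((⊤:ℕ∞)) ψ) (i : Fin d) :
    ContDiff ℝ ((⊤:ℕ∞)) (pd i ψ) := by
  rw [contDiff_infty] at *
  intro n
  exact pd_contDiff (by exact_mod_cast hψ (n+1)) i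

lemma conv_pd_swap {g ψ : Vec d → ℝ} (hg : ContDiff ℝ 1 g) (hψ : ContDiff ℝ ((⊤:ℕ∞)) ψ)
    (hψc : HasCompactSupport ψ) (i : Fin d) :
    conv (pd i g) ψ = conv g (pd i ψ) := by
  rw [← pd_conv_left hg hψ.continuous hψc i,
    pd_conv_right hg.continuous (hψ.of_le (coe_le_infty 1)) hψc i]

lemma conv_pdList_swap : ∀ (L : List (Fin d)) {g ψ : Vec d → ℝ},
    ContDiff ℝ (L.length : ℕ) g → ContDiff ℝ ((⊤:ℕ∞)) ψ → HasCompactSupport ψ →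
    ∃ ψ' : Vec d → ℝ, ContDiff ℝ ((⊤:ℕ∞)) ψ' ∧ HasCompactSupport ψ' ∧
      conv (pdList L g) ψ = conv g ψ' := by
  intro L
  induction L with
  | nil => exact fun hg hψ hψc => ⟨_, hψ, hψc, rfl⟩
  | cons i L ih =>
    intro g ψ hg hψ hψc
    have hgL1 : ContDiff ℝ ((1 + L.length : ℕ)) g := by
      convert hg using 2
      simp [List.length_cons]; omega
    have h1 : conv (pdList (i :: L) g) ψ = conv (pdList L g) (pd i ψ) := by
      rw [pdList_cons]
      exact conv_pd_swap (pdList_contDiff (n := 1) L hgL1) hψ hψc i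
    obtain ⟨ψ', h₁, h₂, h₃⟩ := ih
      (hg.of_le (by exact_mod_cast Nat.le_succ L.length))
      (pd_contDiff_top hψ i) (hasCompactSupport_pd hψc i)
    exact ⟨ψ', h₁, h₂, h1.trans h₃⟩

end St18

namespace St18
variable {d : ℕ}

/-- the "norm at infinity" filter, with the sup norm -/
def lf (d : ℕ) : Filter (Vec d) := comap (fun x : Vec d => ‖x‖) atTop

lemma eventually_lf {p : Vec d → Prop} :
    (∀ᶠ x in lf d, p x) ↔ ∃ R : ℝ, ∀ x : Vec d, R ≤ ‖x‖ → p x := by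
  rw [lf, eventually_comap, eventually_atTop]
  constructor
  · rintro ⟨a, ha⟩
    exact ⟨a, fun x hx => ha ‖x‖ hx x rfl⟩
  · rintro ⟨R, hR⟩
    exact ⟨R, fun b hb x hx => hR x (hx ▸ hb)⟩

lemma tendsto_tail {f : Vec d → ℝ} (hf : Integrable f) :
    Tendsto (fun r : ℝ => ∫ z in {z : Vec d | r ≤ ‖z‖}, ‖f z‖) atTop (𝓝 0) := by
  have hms : ∀ r : ℝ, MeasurableSet {z : Vec d | r ≤ ‖z‖} := by
    intro r
    exact isClosed_le continuous_const continuous_norm |>.measurableSet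
  have h := tendsto_setIntegral_of_antitone (μ := volume) (f := fun z : Vec d => ‖f z‖)
      hms (fun r r' hrr' => fun z hz => le_trans hrr' hz) ⟨0, hf.norm.integrableOn⟩
  have hempty : (⋂ r : ℝ, {z : Vec d | r ≤ ‖z‖}) = ∅ := by
    ext z
    simp only [Set.mem_iInter, Set.mem_setOf_eq, Set.mem_empty_iff_false, iff_false, not_forall]
    exact ⟨‖z‖ + 1, by simp⟩
  rwa [hempty, MeasureTheory.setIntegral_empty] at h

lemma conv_tendsto_zero {f ψ : Vec d → ℝ} (hf : Integrable f) (hψ : Continuous ψ)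
    (hψc : HasCompactSupport ψ) :
    Tendsto (conv f ψ) (lf d) (𝓝 0) := by
  obtain ⟨M, hM⟩ := global_bound hψ hψc
  have hM0 : 0 ≤ M := le_trans (norm_nonneg _) (hM 0)
  obtain ⟨R₀, hR₀⟩ := hψc.isBounded.subset_closedBall 0
  set T : ℝ → ℝ := fun r => ∫ z in {z : Vec d | r ≤ ‖z‖}, ‖f z‖ with hT
  have hTnn : ∀ r, 0 ≤ T r := fun r =>
    MeasureTheory.setIntegral_nonneg ((isClosed_le continuous_const
      continuous_norm).measurableSet) (fun z _ => norm_nonneg _)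
  have hbd : ∀ x : Vec d, ‖conv f ψ x‖ ≤ M * T (‖x‖ - R₀) := by
    intro x
    rw [conv_symm_form]
    set S : Set (Vec d) := {z : Vec d | ‖x‖ - R₀ ≤ ‖z‖} with hS
    have hSm : MeasurableSet S := (isClosed_le continuous_const continuous_norm).measurableSet
    have hbint : Integrable (S.indicator fun z : Vec d => M * ‖f z‖) volume := by
      apply MeasureTheory.Integrable.indicator _ hSm
      exact hf.norm.const_mul M
    have hle : ∀ z : Vec d, ‖ψ (x - z) * f z‖ ≤ S.indicator (fun z => M * ‖f z‖) z := by
      intro z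
      by_cases hz : z ∈ S
      · rw [Set.indicator_of_mem hz, norm_mul]
        exact mul_le_mul_of_nonneg_right (hM _) (norm_nonneg _)
      · have hznorm : ‖z‖ < ‖x‖ - R₀ := not_le.mp hz
        have : ψ (x - z) = 0 := by
          apply image_eq_zero_of_notMem_tsupport
          intro hmem
          have := Metric.mem_closedBall.mp (hR₀ hmem)
          rw [dist_zero_right] at this
          have h2 : ‖x‖ - ‖z‖ ≤ ‖x - z‖ := norm_sub_norm_le x z
          linarith
        rw [Set.indicator_of_notMem hz, this]
        simp
    calc ‖∫ z, ψ (x - z) * f z‖ ≤ ∫ z, S.indicator (fun z => M * ‖f z‖) z :=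
          MeasureTheory.norm_integral_le_of_norm_le hbint (Eventually.of_forall hle)
      _ = ∫ z in S, M * ‖f z‖ := MeasureTheory.integral_indicator hSm
      _ = M * T (‖x‖ - R₀) := by rw [MeasureTheory.integral_const_mul]
  apply squeeze_zero_norm hbd
  have h1 : Tendsto (fun x : Vec d => ‖x‖ - R₀) (lf d) atTop :=
    tendsto_atTop_add_const_right _ (-R₀) tendsto_comap |>.congr (fun x => by ring_nf)
  have := (tendsto_tail hf).comp h1
  have h2 : Tendsto (fun x : Vec d => M * T (‖x‖ - R₀)) (lf d) (𝓝 (M * 0)) :=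
    tendsto_const_nhds.mul this
  simpa using h2

end St18

namespace St18
variable {d : ℕ}

lemma top_tendsto {f : Vec d → ℝ} (hfint : Integrable f) (L : List (Fin d))
    (hf : ContDiff ℝ (L.length : ℕ) f) (hu : UniformContinuous (pdList L f)) :
    Tendsto (pdList L f) (lf d) (𝓝 0) := by
  set g := pdList L f with hg
  have hgc : Continuous g := by
    have := pdList_contDiff (n := 0) L (by convert hf using 2; simp)
    exact_mod_cast this.continuous
  rw [Metric.tendsto_nhds]
  intro ε hε
  obtain ⟨δ, hδ0, hδ⟩ := Metric.uniformContinuous_iff.mp hu (ε/2) (half_pos hε)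
  set b : ContDiffBump (0 : Vec d) := ⟨δ/2, δ, by positivity, by linarith⟩ with hb
  set φ := b.normed volume with hφ
  have hφcont : Continuous φ := b.continuous_normed
  have hφsm : ContDiff ℝ ((⊤:ℕ∞)) φ := b.contDiff_normed
  have hφcs : HasCompactSupport φ := b.hasCompactSupport_normed
  have hφint : ∫ y, φ y = 1 := b.integral_normed
  have hφnn : ∀ y, 0 ≤ φ y := b.nonneg_normed
  have hφsupp : Function.support φ = Metric.ball 0 δ := b.support_normed_eq
  have hclose : ∀ x, ‖g x - conv g φ x‖ ≤ ε / 2 := by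
    intro x
    have hint1 : Integrable (fun y : Vec d => φ y * g x) volume :=
      ((hφcont.integrable_of_hasCompactSupport hφcs).mul_const (g x))
    have hint2 : Integrable (fun y : Vec d => φ y * g (x - y)) volume := by
      apply Continuous.integrable_of_hasCompactSupport
      · exact hφcont.mul (hgc.comp (by fun_prop))
      · exact hφcs.mul_right
    have h1 : g x = ∫ y, φ y * g x := by
      rw [MeasureTheory.integral_mul_const, hφint, one_mul]
    have h2 : g x - conv g φ x = ∫ y, φ y * (g x - g (x - y)) := by
      rw [conv]
      conv_lhs => rw [h1]
      rw [← MeasureTheory.integral_sub hint1 hint2]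
      congr 1; funext y; ring
    rw [h2]
    have hbint : Integrable (fun y : Vec d => φ y * (ε/2)) volume :=
      (hφcont.integrable_of_hasCompactSupport hφcs).mul_const _
    have hble : ∀ y : Vec d, ‖φ y * (g x - g (x - y))‖ ≤ φ y * (ε/2) := by
      intro y
      by_cases hy : φ y = 0
      · simp [hy]
      · have hmem : y ∈ Metric.ball (0 : Vec d) δ := by
          rw [← hφsupp]; exact hy
        have hdist : dist (x - y) x < δ := by
          rw [dist_eq_norm]
          simpa using Metric.mem_ball.mp hmem
        have := hδ hdist
        rw [norm_mul, Real.norm_eq_abs (φ y), abs_of_nonneg (hφnn y)]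
        apply mul_le_mul_of_nonneg_left _ (hφnn y)
        rw [Real.norm_eq_abs, abs_sub_comm]
        exact le_of_lt (by simpa [Real.dist_eq] using this)
    calc ‖∫ y, φ y * (g x - g (x - y))‖ ≤ ∫ y, φ y * (ε/2) :=
          MeasureTheory.norm_integral_le_of_norm_le hbint (Eventually.of_forall hble)
      _ = ε/2 := by rw [MeasureTheory.integral_mul_const, hφint, one_mul]
  obtain ⟨ψ, hψs, hψc, hform⟩ := conv_pdList_swap L hf hφsm hφcs
  have htz : Tendsto (conv f ψ) (lf d) (𝓝 0) :=
    conv_tendsto_zero hfint hψs.continuous hψc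
  have hev : ∀ᶠ x in lf d, ‖conv f ψ x‖ < ε / 2 := by
    have := Metric.tendsto_nhds.mp htz (ε/2) (half_pos hε)
    simpa [dist_eq_norm] using this
  filter_upwards [hev] with x hx
  rw [Real.dist_eq, sub_zero]
  have : conv g φ x = conv f ψ x := by rw [hg, hform]
  calc |g x| = ‖g x - conv g φ x + conv g φ x‖ := by rw [sub_add_cancel]; rfl
    _ ≤ ‖g x - conv g φ x‖ + ‖conv g φ x‖ := norm_add_le _ _
    _ < ε/2 + ε/2 := by
        apply add_lt_add_of_le_of_lt (hclose x)
        rw [this]; exact hx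
    _ = ε := by ring

end St18

namespace St18
variable {d : ℕ}

lemma bounded_of_tendsto {g : Vec d → ℝ} (hgc : Continuous g)
    (h : Tendsto g (lf d) (𝓝 0)) : ∃ K, ∀ x, ‖g x‖ ≤ K := by
  have hev : ∀ᶠ x in lf d, ‖g x‖ ≤ 1 := by
    have := Metric.tendsto_nhds.mp h 1 one_pos
    filter_upwards [this] with x hx
    rw [Real.dist_eq, sub_zero] at hx
    exact le_of_lt hx
  obtain ⟨R, hR⟩ := eventually_lf.mp hev
  obtain ⟨C, hC⟩ := (isCompact_closedBall (0 : Vec d) R).exists_bound_of_continuousOn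
    hgc.continuousOn
  refine ⟨max 1 C, fun x => ?_⟩
  by_cases hx : R ≤ ‖x‖
  · exact (hR x hx).trans (le_max_left _ _)
  · refine (hC x ?_).trans (le_max_right _ _)
    rw [Metric.mem_closedBall, dist_zero_right]
    exact le_of_not_ge hx

lemma uc_of_pd_bounded {g : Vec d → ℝ} (hg : ContDiff ℝ 1 g) {K : ℝ}
    (hK : ∀ (i : Fin d) (x : Vec d), ‖pd i g x‖ ≤ K) : UniformContinuous g := by
  have hgd : Differentiable ℝ g := hg.differentiable one_ne_zero
  have hfb : ∀ x : Vec d, ‖fderiv ℝ g x‖ ≤ d * max K 0 := by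
    intro x
    apply ContinuousLinearMap.opNorm_le_bound _ (by positivity)
    intro v
    have hv : (v : Vec d) = ∑ j, v j • (Pi.single j 1 : Vec d) := by
      have := pi_eq_sum_univ v
      convert this using 3 with j
      funext k
      simp [Pi.single_apply, eq_comm]
    calc ‖fderiv ℝ g x v‖ = ‖∑ j, v j * fderiv ℝ g x (Pi.single j 1)‖ := by
          conv_lhs => rw [hv]
          rw [map_sum]
          congr 1
          apply Finset.sum_congr rfl
          intro j _
          rw [(fderiv ℝ g x).map_smul]
          simp
      _ ≤ ∑ j, ‖v j * fderiv ℝ g x (Pi.single j 1)‖ := norm_sum_le _ _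
      _ ≤ ∑ j : Fin d, ‖v‖ * max K 0 := by
          apply Finset.sum_le_sum
          intro j _
          rw [norm_mul]
          apply mul_le_mul (norm_le_pi_norm v j) _ (norm_nonneg _) (norm_nonneg _)
          have := hK j x
          rw [pd_eq_fderiv hgd] at this
          exact this.trans (le_max_left _ _)
      _ = d * max K 0 * ‖v‖ := by
          rw [Finset.sum_const, Finset.card_univ]
          simp [Fintype.card_fin]
          ring
  have hlip : LipschitzWith (Real.toNNReal (d * max K 0)) g := by
    apply lipschitzWith_of_nnnorm_fderiv_le hgd
    intro x
    have h1 : ‖fderiv ℝ g x‖ ≤ (Real.toNNReal (↑d * max K 0) : ℝ) := by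
      rw [Real.coe_toNNReal _ (by positivity)]
      exact hfb x
    exact_mod_cast h1
  exact hlip.uniformContinuous

end St18

namespace St18
variable {d : ℕ}

lemma sum_update (β : Fin d → ℕ) (i : Fin d) :
    (∑ j, Function.update β i (β i + 1) j) = (∑ j, β j) + 1 := by
  rw [Finset.sum_update_of_mem (Finset.mem_univ i)]
  have h2 : ∑ j, β j = β i + ∑ j ∈ Finset.univ \ {i}, β j := by
    rw [Finset.sum_eq_add_sum_sdiff_singleton_of_mem (Finset.mem_univ i)]
  omega

lemma mlist_perm_update (β : Fin d → ℕ) (i : Fin d) :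
    (mlist (Function.update β i (β i + 1))).Perm (i :: mlist β) := by
  rw [List.perm_iff_count]
  intro j
  rw [count_mlist, List.count_cons, count_mlist]
  by_cases h : j = i
  · subst h; simp
  · have h' : ¬(i = j) := fun habs => h habs.symm
    simp [Function.update_of_ne h, h, h']

lemma main : ∀ (m : ℕ) (f : Vec d → ℝ), Integrable f → ContDiff ℝ (m : ℕ∞) f →
    (∀ α : Fin d → ℕ, (∑ i, α i) = m → UniformContinuous (mderiv α f)) →
    ∀ γ : Fin d → ℕ, (∑ i, γ i) ≤ m → Tendsto (mderiv γ f) (lf d) (𝓝 0) := by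
  intro m
  induction m with
  | zero =>
    intro f hfint hf hfu γ hγ
    have hsum : (∑ i, γ i) = 0 := Nat.le_zero.mp hγ
    rw [mderiv_eq_pdList]
    apply top_tendsto hfint
    · have hlen : (mlist γ).length = 0 := by rw [length_mlist, hsum]
      rw [hlen]
      exact_mod_cast hf
    · rw [← mderiv_eq_pdList]
      exact hfu γ hsum
  | succ m ih =>
    intro f hfint hf hfu γ hγ
    have htop : ∀ γ' : Fin d → ℕ, (∑ i, γ' i) = m + 1 →
        Tendsto (mderiv γ' f) (lf d) (𝓝 0) := by
      intro γ' hsum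
      rw [mderiv_eq_pdList]
      apply top_tendsto hfint
      · have hlen : (mlist γ').length = m + 1 := by rw [length_mlist, hsum]
        rw [hlen]
        exact_mod_cast hf
      · rw [← mderiv_eq_pdList]
        exact hfu γ' hsum
    rcases Nat.lt_or_ge (∑ i, γ i) (m+1) with hlt | hge
    · apply ih f hfint (hf.of_le (by exact_mod_cast Nat.le_succ m)) _ γ (by omega)
      intro β hβ
      -- uniform continuity of an order-m derivative
      have hβc1 : ContDiff ℝ 1 (mderiv β f) := by
        rw [mderiv_eq_pdList]
        apply pdList_contDiff (n := 1) (mlist β)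
        have hlen : 1 + (mlist β).length = m + 1 + 0 := by rw [length_mlist, hβ]; omega
        rw [hlen]
        exact_mod_cast hf
      have hbd : ∀ i : Fin d, ∃ K, ∀ x, ‖pd i (mderiv β f) x‖ ≤ K := by
        intro i
        set α := Function.update β i (β i + 1) with hα
        have hsα : (∑ j, α j) = m + 1 := by rw [hα, sum_update, hβ]
        have hlenα : (mlist α).length = m + 1 := by rw [length_mlist, hsα]
        have heq : pd i (mderiv β f) = pdList (i :: mlist β) f := by
          rw [mderiv_eq_pdList]; rfl
        have h2 : pdList (mlist α) f = pdList (i :: mlist β) f := by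
          apply pdList_perm (mlist_perm_update β i)
          rw [hlenα]
          exact_mod_cast hf
        rw [heq, ← h2, ← mderiv_eq_pdList]
        have hcont : Continuous (mderiv α f) := by
          rw [mderiv_eq_pdList]
          have := pdList_contDiff (n := 0) (mlist α) (by
            rw [show ((0:ℕ) + (mlist α).length : ℕ) = m + 1 by rw [hlenα]; omega]
            exact_mod_cast hf)
          exact_mod_cast this.continuous
        exact bounded_of_tendsto hcont (htop α hsα)
      choose K hK using hbd
      set B : ℝ := ∑ i : Fin d, |K i| with hB
      apply uc_of_pd_bounded hβc1 (K := B)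
      intro i x
      calc ‖pd i (mderiv β f) x‖ ≤ K i := hK i x
        _ ≤ |K i| := le_abs_self _
        _ ≤ B := Finset.single_le_sum (fun j _ => abs_nonneg (K j)) (Finset.mem_univ i)
    · exact htop γ (le_antisymm hγ hge)

end St18

namespace St18
variable {d : ℕ}

lemma euclNorm_le_sqrt_mul (z : Vec d) : euclNorm z ≤ Real.sqrt d * ‖z‖ := by
  rw [euclNorm]
  have h1 : (∑ i, z i ^ 2) ≤ (d : ℝ) * ‖z‖ ^ 2 := by
    calc ∑ i, z i ^ 2 ≤ ∑ _i : Fin d, ‖z‖ ^ 2 := by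
          apply Finset.sum_le_sum
          intro i _
          have h0 : |z i| ≤ ‖z‖ := by simpa using norm_le_pi_norm z i
          calc z i ^ 2 = |z i| ^ 2 := (sq_abs _).symm
            _ ≤ ‖z‖ ^ 2 := by
                apply pow_le_pow_left₀ (abs_nonneg _) h0
      _ = (d : ℝ) * ‖z‖ ^ 2 := by
          rw [Finset.sum_const, Finset.card_univ]
          simp [Fintype.card_fin, nsmul_eq_mul]
  calc Real.sqrt (∑ i, z i ^ 2) ≤ Real.sqrt ((d : ℝ) * ‖z‖ ^ 2) := Real.sqrt_le_sqrt h1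
    _ = Real.sqrt d * ‖z‖ := by
        rw [Real.sqrt_mul (Nat.cast_nonneg d), Real.sqrt_sq (norm_nonneg z)]

lemma comap_euclNorm_le : (Filter.comap euclNorm atTop : Filter (Vec d)) ≤ lf d := by
  rcases Nat.eq_zero_or_pos d with hd | hd
  · subst hd
    have hbot : (Filter.comap euclNorm atTop : Filter (Vec 0)) = ⊥ := by
      rw [← Filter.empty_mem_iff_bot, Filter.mem_comap]
      refine ⟨Set.Ici 1, Filter.Ici_mem_atTop 1, ?_⟩
      intro z hz
      have h0 : euclNorm z = 0 := by simp [euclNorm]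
      rw [Set.mem_preimage, h0] at hz
      have : (1:ℝ) ≤ 0 := hz
      norm_num at this
    rw [hbot]; exact bot_le
  · rw [lf, ← Filter.map_le_iff_le_comap]
    have hs : (0:ℝ) < Real.sqrt d := Real.sqrt_pos.mpr (by exact_mod_cast hd)
    have hmono : ∀ x : Vec d, euclNorm x / Real.sqrt d ≤ ‖x‖ := by
      intro x
      rw [div_le_iff₀ hs]
      calc euclNorm x ≤ Real.sqrt d * ‖x‖ := euclNorm_le_sqrt_mul x
        _ = ‖x‖ * Real.sqrt d := by ring
    exact tendsto_atTop_mono hmono ((tendsto_comap).atTop_div_const hs)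

end St18


/-- if `f ∈ L¹(ℝ^d) ∩ C^m(ℝ^d)` and all partial derivatives of order `m`
are uniformly continuous, then `f^{(γ)}(x) → 0` as `‖x‖ → ∞` for every `|γ| ≤ m`. -/
theorem statement18 {d : ℕ} (m : ℕ)
    (f : Vec d → ℝ) (hfint : Integrable f) (hf : ContDiff ℝ (m : ℕ∞) f)
    (hfu : ∀ α : Fin d → ℕ, (∑ i, α i) = m → UniformContinuous (mderiv α f)) :
    ∀ γ : Fin d → ℕ, (∑ i, γ i) ≤ m →
      Tendsto (mderiv γ f) (Filter.comap euclNorm atTop) (𝓝 0) := by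
  intro γ hγ
  exact (St18.main m f hfint hf hfu γ hγ).mono_left St18.comap_euclNorm_le
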